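/- Let R and S be nonnegative real vectors in ℝ^n with equal component sums. There exists an n×n nonnegative real matrix A with row sum vector R and column sum vector S that is invariant under both matrix transposition and transposition about the antidiagonal if and only if (a) R = S and (b) R is palindromic. Moreover, if R and S have nonnegative integer components, such a matrix with nonnegative integer entries exists under the same condition. -/
import Mathlib

private lemma sum_rev {M : Type*} [AddCommMonoid M] (n : ℕ) (f : Fin n → M) :
    ∑ j : Fin n, f j.rev = ∑ j, f j :=
  Fintype.sum_equiv (Fin.revPerm) _ _ (fun _ => rfl)

/-- **Transportation with the Klein four-group symmetry `D_×`.**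
`𝒯^×(R,S) ≠ ∅` iff (a) `R = S` and (b) `R` is palindromic; the same holds
for the integral class `𝒯^×_ℤ(R,S)`. -/
theorem klein_diagonal_transportation (n : ℕ) (R S : Fin n → ℝ)
    (hR : ∀ i, 0 ≤ R i) (hS : ∀ j, 0 ≤ S j)
    (hsum : ∑ i, R i = ∑ j, S j) :
    ((∃ A : Matrix (Fin n) (Fin n) ℝ,
        (∀ i j, 0 ≤ A i j) ∧
        (∀ i, ∑ j, A i j = R i) ∧
        (∀ j, ∑ i, A i j = S j) ∧
        (∀ i j, A i j = A j i) ∧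
        (∀ i j, A i j = A j.rev i.rev)) ↔
      (R = S ∧ ∀ i, R i = R i.rev))
    ∧ ((∀ i, ∃ k : ℕ, R i = k) → (∀ j, ∃ k : ℕ, S j = k) →
      ((∃ A : Matrix (Fin n) (Fin n) ℕ,
          (∀ i, ((∑ j, A i j : ℕ) : ℝ) = R i) ∧
          (∀ j, ((∑ i, A i j : ℕ) : ℝ) = S j) ∧
          (∀ i j, A i j = A j i) ∧
          (∀ i j, A i j = A j.rev i.rev)) ↔
        (R = S ∧ ∀ i, R i = R i.rev))) := by
  constructor
  · constructor
    · rintro ⟨A, hpos, hrow, hcol, hsym, hrev⟩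
      constructor
      · funext i
        rw [← hrow i, ← hcol i]
        exact Finset.sum_congr rfl fun j _ => hsym i j
      · intro i
        have h1 : ∑ j : Fin n, A i j = ∑ j : Fin n, A j.rev i.rev :=
          Finset.sum_congr rfl fun j _ => hrev i j
        have h2 : ∑ j : Fin n, A j.rev i.rev = ∑ j, A j i.rev := sum_rev n (fun j => A j i.rev)
        have h3 : ∑ j, A i.rev j = ∑ j, A j i.rev :=
          Finset.sum_congr rfl fun j _ => hsym i.rev j
        rw [← hrow i, ← hrow i.rev, h1, h2, h3]
    · rintro ⟨hRS, hpal⟩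
      refine ⟨fun i j => if i = j then R i else 0, ?_, ?_, ?_, ?_, ?_⟩
      · intro i j; dsimp only; split <;> [exact hR i; rfl]
      · intro i; simp
      · intro j
        rw [← hRS]
        rw [Finset.sum_eq_single j (fun i _ hij => if_neg hij) (by simp)]
        simp
      · intro i j; dsimp only
        rcases eq_or_ne i j with h | h
        · subst h; simp
        · rw [if_neg h, if_neg (Ne.symm h)]
      · intro i j; dsimp only
        rcases eq_or_ne i j with h | h
        · subst h; simp [hpal i]
        · rw [if_neg h, if_neg (fun hh => h (Fin.rev_injective hh).symm)]
  · intro hRk hSk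
    constructor
    · rintro ⟨A, hrow, hcol, hsym, hrev⟩
      constructor
      · funext i
        rw [← hrow i, ← hcol i]
        push_cast
        exact Finset.sum_congr rfl fun j _ => by rw [hsym]
      · intro i
        have h1 : ∑ j : Fin n, A i j = ∑ j : Fin n, A j.rev i.rev :=
          Finset.sum_congr rfl fun j _ => hrev i j
        have h2 : ∑ j : Fin n, A j.rev i.rev = ∑ j, A j i.rev := sum_rev n (fun j => A j i.rev)
        have h3 : ∑ j, A i.rev j = ∑ j, A j i.rev :=
          Finset.sum_congr rfl fun j _ => hsym i.rev j
        rw [← hrow i, ← hrow i.rev, h1, h2, h3]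
    · rintro ⟨hRS, hpal⟩
      set m : Fin n → ℕ := fun i => (hRk i).choose with hm
      have hmval : ∀ i, R i = (m i : ℝ) := fun i => (hRk i).choose_spec
      have hmpal : ∀ i, m i = m i.rev := by
        intro i
        have := (hmval i).symm.trans ((hpal i).trans (hmval i.rev))
        exact_mod_cast this
      refine ⟨fun i j => if i = j then m i else 0, ?_, ?_, ?_, ?_⟩
      · intro i; simp [hmval i]
      · intro j
        rw [Finset.sum_eq_single j (fun i _ hij => if_neg hij) (by simp)]
        simp [← hRS, hmval j]
      · intro i j; dsimp only
        rcases eq_or_ne i j with h | h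
        · subst h; simp
        · rw [if_neg h, if_neg (Ne.symm h)]
      · intro i j; dsimp only
        rcases eq_or_ne i j with h | h
        · subst h; simp [hmpal i]
        · rw [if_neg h, if_neg (fun hh => h (Fin.rev_injective hh).symm)]
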